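/- Let R be the random graph and f ∈ Aut(R) an automorphism with property (*): (i) f has only finitely many finite orbits and infinitely many infinite orbits, and (ii) for every finite M ⊆ V and τ : M → 2 there exists a vertex v realizing τ with v not in the union of f-orbits of elements of M. Let N be the union of the finite orbits of f, and let τ : N → 2. Then at least one of the following holds: (1) for every finite N̄ ⊇ N and every τ̄ : N̄ → 2 extending τ there is a vertex v realizing τ̄ with v ∉ O^f(N̄) and v not adjacent to f(v); or (2) for every finite N̄ ⊇ N and every extension τ̄ : N̄ → 2 of τ there is a vertex v realizing τ̄ with v ∉ O^f(N̄) and v adjacent to f(v). -/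

import Mathlib

/-- The defining extension property of the random (Rado) graph. -/
def ExtensionProperty {V : Type*} (G : SimpleGraph V) : Prop :=
  ∀ A B : Finset V, Disjoint A B →
    ∃ v : V, (∀ a ∈ A, G.Adj a v) ∧ (∀ b ∈ B, ¬ G.Adj b v)

/-- `v` realizes `τ` over `M`. -/
def Realizes {V : Type*} (G : SimpleGraph V) (M : Finset V) (τ : V → Bool) (v : V) : Prop :=
  ∀ w ∈ M, (G.Adj w v ↔ τ w = true)

/-- The orbit `O^f(v) = {f^k v : k ∈ ℤ}` of a vertex under an automorphism. -/
def fOrbit {V : Type*} {G : SimpleGraph V} (f : G ≃g G) (v : V) : Set V :=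
  Set.range fun k : ℤ => (f.toEquiv ^ k) v

/-- Property (*): only finitely many finite orbits, infinitely many infinite orbits, and
every finite adjacency pattern is realized by a vertex outside the orbits of its domain. -/
def StarProperty {V : Type*} (G : SimpleGraph V) (f : G ≃g G) : Prop :=
  {v : V | (fOrbit f v).Finite}.Finite ∧
  (∀ W : Finset V, ∃ v : V, (fOrbit f v).Infinite ∧ ∀ w ∈ W, v ∉ fOrbit f w) ∧
  (∀ M : Finset V, ∀ τ : V → Bool, ∃ v : V, Realizes G M τ v ∧ ∀ w ∈ M, v ∉ fOrbit f w)

namespace StarAux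

variable {V : Type*} {G : SimpleGraph V} (f : G ≃g G)

lemma zpow_apply_zpow (k j : ℤ) (a : V) :
    (f.toEquiv ^ k) ((f.toEquiv ^ j) a) = (f.toEquiv ^ (k + j)) a := by
  rw [← Equiv.Perm.mul_apply, ← zpow_add]

lemma apply_eq (a : V) : f a = f.toEquiv a := rfl

lemma adj_zpow (k : ℤ) (a b : V) :
    G.Adj ((f.toEquiv ^ k) a) ((f.toEquiv ^ k) b) ↔ G.Adj a b := by
  have hinv : ∀ x y : V, G.Adj (f.toEquiv⁻¹ x) (f.toEquiv⁻¹ y) ↔ G.Adj x y := by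
    intro x y
    conv_rhs => rw [show x = f (f.toEquiv⁻¹ x) from (Equiv.apply_symm_apply _ _).symm,
      show y = f (f.toEquiv⁻¹ y) from (Equiv.apply_symm_apply _ _).symm]
    exact (f.map_adj_iff).symm
  induction k using Int.induction_on with
  | zero => simp
  | succ n ih =>
      have h1 : ∀ x : V, (f.toEquiv ^ ((n : ℤ) + 1)) x = f ((f.toEquiv ^ (n : ℤ)) x) := by
        intro x
        rw [add_comm, zpow_one_add, Equiv.Perm.mul_apply]
        rfl
      rw [h1, h1, f.map_adj_iff]
      exact ih
  | pred n ih =>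
      have h1 : ∀ x : V, (f.toEquiv ^ (-(n : ℤ) - 1)) x =
          f.toEquiv⁻¹ ((f.toEquiv ^ (-(n : ℤ))) x) := by
        intro x
        rw [show -(n:ℤ) - 1 = (-1) + (-(n:ℤ)) by ring, zpow_add, zpow_neg_one,
          Equiv.Perm.mul_apply]
      rw [h1, h1, hinv]
      exact ih

lemma mem_fOrbit (j : ℤ) (w : V) : (f.toEquiv ^ j) w ∈ fOrbit f w := ⟨j, rfl⟩

lemma zpow_mem_fOrbit (k : ℤ) {w x : V} (hx : x ∈ fOrbit f w) :
    (f.toEquiv ^ k) x ∈ fOrbit f w := by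
  obtain ⟨j, rfl⟩ := hx
  exact ⟨k + j, (zpow_apply_zpow f k j w).symm⟩

lemma fOrbit_zpow (k : ℤ) (w : V) : fOrbit f ((f.toEquiv ^ k) w) = fOrbit f w := by
  ext x
  constructor
  · rintro ⟨j, rfl⟩
    exact ⟨j + k, (zpow_apply_zpow f j k w).symm⟩
  · rintro ⟨j, rfl⟩
    refine ⟨j - k, ?_⟩
    show (f.toEquiv ^ (j - k)) ((f.toEquiv ^ k) w) = (f.toEquiv ^ j) w
    rw [zpow_apply_zpow, sub_add_cancel]

lemma fix_neg {d : ℤ} {v : V} (h : (f.toEquiv ^ d) v = v) : (f.toEquiv ^ (-d)) v = v := by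
  have h2 := congrArg (f.toEquiv ^ (-d)) h
  rw [zpow_apply_zpow, neg_add_cancel, zpow_zero, Equiv.Perm.one_apply] at h2
  exact h2.symm

lemma fix_zpow_mul {n : ℤ} {w : V} (h : (f.toEquiv ^ n) w = w) (q : ℤ) :
    (f.toEquiv ^ (n * q)) w = w := by
  induction q using Int.induction_on with
  | zero => simp
  | succ i ih =>
      rw [show n * ((i : ℤ) + 1) = n + n * i by ring, ← zpow_apply_zpow, ih, h]
  | pred i ih =>
      rw [show n * (-(i : ℤ) - 1) = (-n) + n * (-(i : ℤ)) by ring, ← zpow_apply_zpow, ih,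
        fix_neg f h]

lemma finite_of_period {n : ℕ} (hn : 0 < n) {v : V} (h : (f.toEquiv ^ (n : ℤ)) v = v) :
    (fOrbit f v).Finite := by
  apply Set.Finite.subset (Set.finite_range fun i : Fin n => (f.toEquiv ^ (i : ℤ)) v)
  rintro x ⟨j, rfl⟩
  have hn' : (0 : ℤ) < (n : ℤ) := by exact_mod_cast hn
  have hmod : 0 ≤ j % (n : ℤ) := Int.emod_nonneg j hn'.ne'
  have hlt : j % (n : ℤ) < (n : ℤ) := Int.emod_lt_of_pos j hn'
  refine ⟨⟨(j % (n : ℤ)).toNat, ?_⟩, ?_⟩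
  · omega
  show (f.toEquiv ^ (((j % (n:ℤ)).toNat : ℤ))) v = (f.toEquiv ^ j) v
  rw [Int.toNat_of_nonneg hmod]
  conv_rhs => rw [show j = (j % (n : ℤ)) + (n : ℤ) * (j / (n : ℤ)) by
    rw [add_comm]; exact (Int.mul_ediv_add_emod j n).symm]
  rw [← zpow_apply_zpow, fix_zpow_mul f h]

lemma finite_of_fix {d : ℤ} (hd : d ≠ 0) {v : V} (h : (f.toEquiv ^ d) v = v) :
    (fOrbit f v).Finite := by
  rcases Int.natAbs_eq d with he | he
  · exact finite_of_period f (Int.natAbs_pos.mpr hd) (by rw [← he]; exact h)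
  · exact finite_of_period f (Int.natAbs_pos.mpr hd)
      (by rw [show ((d.natAbs : ℕ) : ℤ) = -d by omega]; exact fix_neg f h)

lemma exists_pos_period {v : V} (h : (fOrbit f v).Finite) :
    ∃ n : ℕ, 0 < n ∧ (f.toEquiv ^ (n : ℤ)) v = v := by
  have hnotinj : ¬ Function.Injective (fun k : ℤ => (f.toEquiv ^ k) v) := by
    intro hinj
    exact (Set.infinite_range_of_injective hinj) h
  obtain ⟨a, b, hab, hne⟩ := Function.not_injective_iff.mp hnotinj
  replace hab : (f.toEquiv ^ a) v = (f.toEquiv ^ b) v := hab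
  have hfix : (f.toEquiv ^ (a - b)) v = v := by
    have h2 := congrArg (f.toEquiv ^ (-b)) hab
    rw [zpow_apply_zpow, zpow_apply_zpow, show (-b) + a = a - b by ring,
      neg_add_cancel, zpow_zero, Equiv.Perm.one_apply] at h2
    exact h2
  have hd : a - b ≠ 0 := sub_ne_zero.mpr hne
  refine ⟨(a - b).natAbs, Int.natAbs_pos.mpr hd, ?_⟩
  rcases Int.natAbs_eq (a - b) with he | he
  · rw [← he]; exact hfix
  · rw [show (((a - b).natAbs : ℕ) : ℤ) = -(a - b) by omega]
    exact fix_neg f hfix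

lemma injective_of_infinite {v : V} (h : ¬ (fOrbit f v).Finite) :
    Function.Injective (fun k : ℤ => (f.toEquiv ^ k) v) := by
  intro a b hab
  replace hab : (f.toEquiv ^ a) v = (f.toEquiv ^ b) v := hab
  by_contra hne
  apply h
  have hfix : (f.toEquiv ^ (a - b)) v = v := by
    have h2 := congrArg (f.toEquiv ^ (-b)) hab
    rw [zpow_apply_zpow, zpow_apply_zpow, show (-b) + a = a - b by ring,
      neg_add_cancel, zpow_zero, Equiv.Perm.one_apply] at h2
    exact h2
  exact finite_of_fix f (sub_ne_zero.mpr hne) hfix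

end StarAux


open StarAux

/-- Dichotomy for extensions of a pattern `τ` on the union `N` of finite orbits of an
automorphism `f` with property (*): either every finite extension of `τ` is realized off
the relevant orbits by some `v` with `v` not adjacent to `f v`, or every finite extension
is realized off the relevant orbits by some `v` with `v` adjacent to `f v`. -/
theorem star_dichotomy {V : Type*} [Countable V] [Infinite V]
    (G : SimpleGraph V) (hG : ExtensionProperty G)
    (f : G ≃g G) (hf : StarProperty G f) (τ : V → Bool) :
    (∀ Nb : Finset V, {v : V | (fOrbit f v).Finite} ⊆ ↑Nb →
      ∀ τb : V → Bool, (∀ w : V, (fOrbit f w).Finite → τb w = τ w) →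
        ∃ v : V, Realizes G Nb τb v ∧ (∀ w ∈ Nb, v ∉ fOrbit f w) ∧ ¬ G.Adj v (f v)) ∨
    (∀ Nb : Finset V, {v : V | (fOrbit f v).Finite} ⊆ ↑Nb →
      ∀ τb : V → Bool, (∀ w : V, (fOrbit f w).Finite → τb w = τ w) →
        ∃ v : V, Realizes G Nb τb v ∧ (∀ w ∈ Nb, v ∉ fOrbit f w) ∧ G.Adj v (f v)) := by
  classical
  by_cases hA : (∀ Nb : Finset V, {v : V | (fOrbit f v).Finite} ⊆ ↑Nb →
      ∀ τb : V → Bool, (∀ w : V, (fOrbit f w).Finite → τb w = τ w) →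
        ∃ v : V, Realizes G Nb τb v ∧ (∀ w ∈ Nb, v ∉ fOrbit f w) ∧ ¬ G.Adj v (f v))
  · exact Or.inl hA
  right
  push_neg at hA
  obtain ⟨Nb₀, hNb₀, τb₀, hτb₀, hforced⟩ := hA
  intro Nb hNb τb hτb
  have Nfin : {v : V | (fOrbit f v).Finite}.Finite := hf.1
  set NF : Finset V := Nfin.toFinset with hNF
  have hmemNF : ∀ w : V, w ∈ NF ↔ (fOrbit f w).Finite := by
    intro w; rw [hNF, Set.Finite.mem_toFinset]; rfl
  -- a common period `m` for all vertices with finite orbit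
  obtain ⟨m, hm0, hmfix⟩ : ∃ m : ℕ, 0 < m ∧ ∀ w ∈ NF, (f.toEquiv ^ (m : ℤ)) w = w := by
    choose p hp0 hpfix using fun w : { x // x ∈ NF } =>
      exists_pos_period f ((hmemNF w.1).mp w.2)
    refine ⟨∏ w : { x // x ∈ NF }, p w, Finset.prod_pos (fun w _ => hp0 w), ?_⟩
    intro w hw
    obtain ⟨c, hc⟩ : p ⟨w, hw⟩ ∣ ∏ w : { x // x ∈ NF }, p w :=
      Finset.dvd_prod_of_mem p (Finset.mem_univ _)
    rw [hc]
    push_cast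
    exact fix_zpow_mul f (hpfix ⟨w, hw⟩) c
  -- choose `k`, a positive multiple of `m`, with `f^k (Nb₀ \ NF) ∩ Nb = ∅`
  set P : Finset V := Nb₀.filter (fun w => ¬ (fOrbit f w).Finite) with hP
  have hBad : (⋃ w ∈ P, {j : ℤ | (f.toEquiv ^ j) w ∈ Nb}).Finite := by
    apply Set.Finite.biUnion P.finite_toSet
    intro w hw
    have hwinf : ¬ (fOrbit f w).Finite := (Finset.mem_filter.mp hw).2
    have : {j : ℤ | (f.toEquiv ^ j) w ∈ Nb} =
        (fun j : ℤ => (f.toEquiv ^ j) w) ⁻¹' ↑Nb := rfl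
    rw [this]
    exact Set.Finite.preimage
      (Set.injOn_of_injective (injective_of_infinite f hwinf)) Nb.finite_toSet
  obtain ⟨b, hb⟩ : BddAbove (⋃ w ∈ P, {j : ℤ | (f.toEquiv ^ j) w ∈ Nb}) := hBad.bddAbove
  set k : ℤ := (m : ℤ) * (b.toNat + 1) with hk
  have hkgt : b < k := by
    have h1 : ((b.toNat : ℤ) + 1) ≤ k := by
      rw [hk]
      have hm1 : (1 : ℤ) ≤ (m : ℤ) := by exact_mod_cast hm0
      have hc0 : (0 : ℤ) ≤ (b.toNat : ℤ) + 1 := by positivity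
      nlinarith
    have h2 : b ≤ (b.toNat : ℤ) := Int.self_le_toNat b
    omega
  have hk1 : ∀ w ∈ NF, (f.toEquiv ^ k) w = w := fun w hw => fix_zpow_mul f (hmfix w hw) _
  have hkesc : ∀ w ∈ P, (f.toEquiv ^ k) w ∉ Nb := by
    intro w hw hmem
    have : k ∈ ⋃ w ∈ P, {j : ℤ | (f.toEquiv ^ j) w ∈ Nb} :=
      Set.mem_biUnion hw hmem
    exact absurd (hb this) (not_le.mpr hkgt)
  -- the combined pattern
  set M' : Finset V := Nb ∪ NF ∪ P.image (fun w => (f.toEquiv ^ k) w) with hM'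
  set σ : V → Bool := fun x => if x ∈ Nb then τb x else τb₀ ((f.toEquiv ^ (-k)) x) with hσ
  obtain ⟨v, hvreal, hvorb⟩ := hf.2.2 M' σ
  have hmem1 : ∀ w ∈ Nb, w ∈ M' := fun w hw =>
    Finset.mem_union_left _ (Finset.mem_union_left _ hw)
  have hmem2 : ∀ w ∈ NF, w ∈ M' := fun w hw =>
    Finset.mem_union_left _ (Finset.mem_union_right _ hw)
  have hmem3 : ∀ w ∈ P, (f.toEquiv ^ k) w ∈ M' := fun w hw =>
    Finset.mem_union_right _ (Finset.mem_image_of_mem _ hw)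
  refine ⟨v, ?_, ?_, ?_⟩
  · -- v realizes τb on Nb
    intro w hw
    rw [hvreal w (hmem1 w hw), hσ]
    simp only [hw, if_pos]
  · -- v off orbits of Nb
    intro w hw
    exact hvorb w (hmem1 w hw)
  · -- v adjacent to f v
    set u : V := (f.toEquiv ^ (-k)) v with hu
    have hvu : (f.toEquiv ^ k) u = v := by
      rw [hu, zpow_apply_zpow, add_neg_cancel, zpow_zero, Equiv.Perm.one_apply]
    have hureal : Realizes G Nb₀ τb₀ u := by
      intro w hw
      by_cases hwN : (fOrbit f w).Finite
      · have hwNF : w ∈ NF := (hmemNF w).mpr hwN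
        have hwNb : w ∈ Nb := hNb hwN
        have h1 : G.Adj w u ↔ G.Adj ((f.toEquiv ^ k) w) ((f.toEquiv ^ k) u) :=
          (adj_zpow f k w u).symm
        rw [h1, hk1 w hwNF, hvu, hvreal w (hmem1 w hwNb), hσ]
        simp only [hwNb, if_pos]
        rw [hτb w hwN, hτb₀ w hwN]
      · have hwP : w ∈ P := Finset.mem_filter.mpr ⟨hw, hwN⟩
        have hxM : (f.toEquiv ^ k) w ∈ M' := hmem3 w hwP
        have hxNb : (f.toEquiv ^ k) w ∉ Nb := hkesc w hwP
        have h1 : G.Adj w u ↔ G.Adj ((f.toEquiv ^ k) w) ((f.toEquiv ^ k) u) :=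
          (adj_zpow f k w u).symm
        rw [h1, hvu, hvreal _ hxM, hσ]
        simp only [hxNb, if_neg, if_false]
        rw [zpow_apply_zpow, neg_add_cancel, zpow_zero, Equiv.Perm.one_apply]
    have huorb : ∀ w ∈ Nb₀, u ∉ fOrbit f w := by
      intro w hw hmem
      by_cases hwN : (fOrbit f w).Finite
      · exact hvorb w (hmem2 w ((hmemNF w).mpr hwN))
          (by rw [← hvu]; exact zpow_mem_fOrbit f k hmem)
      · refine hvorb ((f.toEquiv ^ k) w) (hmem3 w (Finset.mem_filter.mpr ⟨hw, hwN⟩)) ?_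
        rw [fOrbit_zpow, ← hvu]
        exact zpow_mem_fOrbit f k hmem
    have hadj : G.Adj u (f u) := hforced u hureal huorb
    have h2 : G.Adj ((f.toEquiv ^ k) u) ((f.toEquiv ^ k) (f u)) := (adj_zpow f k _ _).mpr hadj
    have h3 : (f.toEquiv ^ k) (f u) = f v := by
      have e1 : (f.toEquiv ^ k) (f u) = (f.toEquiv ^ (k + 1)) u := by
        rw [apply_eq f u, show f.toEquiv u = (f.toEquiv ^ (1 : ℤ)) u from by rw [zpow_one],
          zpow_apply_zpow]
      have e2 : f v = (f.toEquiv ^ (1 + k)) u := by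
        rw [apply_eq f v, ← hvu,
          show f.toEquiv ((f.toEquiv ^ k) u) = (f.toEquiv ^ (1 : ℤ)) ((f.toEquiv ^ k) u) from by
            rw [zpow_one],
          zpow_apply_zpow]
      rw [e1, e2, add_comm]
    rw [hvu, h3] at h2
    exact h2
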